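/- arXiv:2501.04151 — 4 statements merged into one kernel-verified Lean document; each statement's English description precedes it below -/
import Mathlib

section
/- Let E ∈ ℝ^{m×m}, c, x ∈ ℝ^m, λ, δ ∈ ℝ, and ‖·‖ a sub-multiplicative matrix norm (with compatible vector norm) such that ‖(λ+δ)E‖ < 1. Define o(μ) = cᵀ (I + μE)^{-1} x₀ where x(λ) = (I + λE)^{-1} x₀, assuming I + λE invertible. Then |o(λ+δ) − o(λ)| ≤ |δ| ‖c‖ ‖E x(λ)‖ / (1 − |λ+δ| ‖E‖). -/
open Matrix

theorem stmt12 {m : ℕ} (N : Matrix (Fin m) (Fin m) ℝ → ℝ)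
    (nv : (Fin m → ℝ) → ℝ)
    (hNnonneg : ∀ A, 0 ≤ N A)
    (hNtri : ∀ A B, N (A + B) ≤ N A + N B)
    (hNhomog : ∀ (c : ℝ) A, N (c • A) = |c| * N A)
    (hNsub : ∀ A B, N (A * B) ≤ N A * N B)
    (hvnonneg : ∀ x, 0 ≤ nv x)
    (hvtri : ∀ x y, nv (x + y) ≤ nv x + nv y)
    (hvhomog : ∀ (c : ℝ) x, nv (c • x) = |c| * nv x)
    (hcompat : ∀ (A : Matrix (Fin m) (Fin m) ℝ) (x : Fin m → ℝ), nv (A *ᵥ x) ≤ N A * nv x)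
    (hdual : ∀ (c x : Fin m → ℝ), |c ⬝ᵥ x| ≤ nv c * nv x)
    (E : Matrix (Fin m) (Fin m) ℝ) (c x₀ : Fin m → ℝ) (lam δ : ℝ)
    (hlam : IsUnit ((1 : Matrix (Fin m) (Fin m) ℝ) + lam • E).det)
    (hsmall : N ((lam + δ) • E) < 1)
    (x : ℝ → (Fin m → ℝ))
    (hx : ∀ μ : ℝ, x μ = ((1 : Matrix (Fin m) (Fin m) ℝ) + μ • E)⁻¹ *ᵥ x₀)
    (o : ℝ → ℝ) (ho : ∀ μ : ℝ, o μ = c ⬝ᵥ x μ) :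
    |o (lam + δ) - o lam| ≤
      |δ| * nv c * nv (E *ᵥ x lam) / (1 - |lam + δ| * N E) := by
  set B : Matrix (Fin m) (Fin m) ℝ := 1 + (lam + δ) • E with hB
  set A : Matrix (Fin m) (Fin m) ℝ := 1 + lam • E with hA
  have hq : N ((lam + δ) • E) = |lam + δ| * N E := hNhomog _ _
  have hqpos : 0 < 1 - |lam + δ| * N E := by rw [← hq]; linarith
  -- nv is definite
  have hdef : ∀ v : Fin m → ℝ, nv v = 0 → v = 0 := by
    intro v hv
    have h1 : |v ⬝ᵥ v| ≤ 0 := by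
      have := hdual v v; rw [hv] at this; linarith
    have h2 : v ⬝ᵥ v = 0 :=
      abs_eq_zero.mp (le_antisymm h1 (abs_nonneg _))
    funext i
    have hs : ∑ j, v j * v j = 0 := h2
    have hnn : ∀ j ∈ Finset.univ, 0 ≤ v j * v j := fun j _ => mul_self_nonneg _
    have := (Finset.sum_eq_zero_iff_of_nonneg hnn).mp hs i (Finset.mem_univ i)
    exact mul_self_eq_zero.mp this
  have key : ∀ v : Fin m → ℝ, B *ᵥ v = 0 → v = 0 := by
    intro v hv
    have hv' : v + ((lam + δ) • E) *ᵥ v = 0 := by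
      have h : B *ᵥ v = v + ((lam + δ) • E) *ᵥ v := by
        rw [hB, Matrix.add_mulVec, Matrix.one_mulVec]
      rwa [h] at hv
    have hveq : v = (-1 : ℝ) • (((lam + δ) • E) *ᵥ v) := by
      have := hv'
      funext i
      have := congrFun hv' i
      simp only [Pi.add_apply, Pi.zero_apply] at this
      simp only [Pi.smul_apply, smul_eq_mul]
      linarith
    have hnv : nv v ≤ N ((lam + δ) • E) * nv v := by
      calc nv v = nv ((-1 : ℝ) • (((lam + δ) • E) *ᵥ v)) := by rw [← hveq]
        _ = |(-1 : ℝ)| * nv (((lam + δ) • E) *ᵥ v) := hvhomog _ _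
        _ = nv (((lam + δ) • E) *ᵥ v) := by norm_num
        _ ≤ N ((lam + δ) • E) * nv v := hcompat _ _
    have : nv v = 0 := by nlinarith [hvnonneg v]
    exact hdef v this
  -- B is invertible
  have hBunit : IsUnit B.det := by
    rw [← Matrix.isUnit_iff_isUnit_det, ← Matrix.mulVec_injective_iff_isUnit]
    intro u w huw
    have : B *ᵥ (u - w) = 0 := by rw [Matrix.mulVec_sub, huw, sub_self]
    have := key _ this
    exact sub_eq_zero.mp this
  -- x₀ identities
  have hBx : B *ᵥ x (lam + δ) = x₀ := by
    rw [hx, Matrix.mulVec_mulVec, Matrix.mul_nonsing_inv _ hBunit, Matrix.one_mulVec]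
  have hAx : A *ᵥ x lam = x₀ := by
    rw [hx, Matrix.mulVec_mulVec, Matrix.mul_nonsing_inv _ hlam, Matrix.one_mulVec]
  set d : Fin m → ℝ := x (lam + δ) - x lam with hd
  have hBd : B *ᵥ d = (-δ) • (E *ᵥ x lam) := by
    rw [hd, Matrix.mulVec_sub, hBx, ← hAx, hB, hA, Matrix.add_mulVec, Matrix.add_mulVec,
      Matrix.one_mulVec, Matrix.smul_mulVec, Matrix.smul_mulVec]
    funext i
    simp only [Pi.sub_apply, Pi.add_apply, Pi.smul_apply, smul_eq_mul]
    ring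
  have hdeq : d = (-δ) • (E *ᵥ x lam) + (-1 : ℝ) • (((lam + δ) • E) *ᵥ d) := by
    have h : B *ᵥ d = d + ((lam + δ) • E) *ᵥ d := by
      rw [hB, Matrix.add_mulVec, Matrix.one_mulVec]
    rw [h] at hBd
    funext i
    have := congrFun hBd i
    simp only [Pi.add_apply, Pi.smul_apply, smul_eq_mul] at this ⊢
    linarith
  have hnvd : nv d ≤ |δ| * nv (E *ᵥ x lam) + (|lam + δ| * N E) * nv d := by
    calc nv d = nv ((-δ) • (E *ᵥ x lam) + (-1 : ℝ) • (((lam + δ) • E) *ᵥ d)) := by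
          rw [← hdeq]
      _ ≤ nv ((-δ) • (E *ᵥ x lam)) + nv ((-1 : ℝ) • (((lam + δ) • E) *ᵥ d)) := hvtri _ _
      _ = |δ| * nv (E *ᵥ x lam) + nv (((lam + δ) • E) *ᵥ d) := by
          rw [hvhomog, hvhomog]; norm_num
      _ ≤ |δ| * nv (E *ᵥ x lam) + N ((lam + δ) • E) * nv d := by
          linarith [hcompat ((lam + δ) • E) d]
      _ = |δ| * nv (E *ᵥ x lam) + (|lam + δ| * N E) * nv d := by rw [hq]
  have hnvd' : nv d ≤ |δ| * nv (E *ᵥ x lam) / (1 - |lam + δ| * N E) := by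
    rw [le_div_iff₀ hqpos]; nlinarith
  have hod : o (lam + δ) - o lam = c ⬝ᵥ d := by
    rw [ho, ho, hd, dotProduct_sub]
  calc |o (lam + δ) - o lam| = |c ⬝ᵥ d| := by rw [hod]
    _ ≤ nv c * nv d := hdual _ _
    _ ≤ nv c * (|δ| * nv (E *ᵥ x lam) / (1 - |lam + δ| * N E)) :=
        mul_le_mul_of_nonneg_left hnvd' (hvnonneg c)
    _ = |δ| * nv c * nv (E *ᵥ x lam) / (1 - |lam + δ| * N E) := by ring
end

section
/- With the setup of the previous bound (‖(λ+δ)E‖ < 1, I + λE invertible, x(μ) = (I + μE)^{-1} x₀), for each coordinate i: |(x(λ+δ) − x(λ))_i| ≤ |δ| ‖e_i‖ ‖E x(λ)‖ / (1 − |λ+δ| ‖E‖), where e_i is the i-th standard basis vector. -/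
open Matrix

theorem stmt13 {m : ℕ} (N : Matrix (Fin m) (Fin m) ℝ → ℝ)
    (nv : (Fin m → ℝ) → ℝ)
    (hNnonneg : ∀ A, 0 ≤ N A)
    (hNtri : ∀ A B, N (A + B) ≤ N A + N B)
    (hNhomog : ∀ (c : ℝ) A, N (c • A) = |c| * N A)
    (hNsub : ∀ A B, N (A * B) ≤ N A * N B)
    (hvnonneg : ∀ x, 0 ≤ nv x)
    (hvtri : ∀ x y, nv (x + y) ≤ nv x + nv y)
    (hvhomog : ∀ (c : ℝ) x, nv (c • x) = |c| * nv x)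
    (hcompat : ∀ (A : Matrix (Fin m) (Fin m) ℝ) (x : Fin m → ℝ), nv (A *ᵥ x) ≤ N A * nv x)
    (hdual : ∀ (c x : Fin m → ℝ), |c ⬝ᵥ x| ≤ nv c * nv x)
    (E : Matrix (Fin m) (Fin m) ℝ) (x₀ : Fin m → ℝ) (lam δ : ℝ)
    (hlam : IsUnit ((1 : Matrix (Fin m) (Fin m) ℝ) + lam • E).det)
    (hsmall : N ((lam + δ) • E) < 1)
    (x : ℝ → (Fin m → ℝ))
    (hx : ∀ μ : ℝ, x μ = ((1 : Matrix (Fin m) (Fin m) ℝ) + μ • E)⁻¹ *ᵥ x₀) :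
    ∀ i : Fin m,
      |(x (lam + δ) - x lam) i| ≤
        |δ| * nv (Pi.single i 1) * nv (E *ᵥ x lam) / (1 - |lam + δ| * N E) := by
  intro i
  set A : Matrix (Fin m) (Fin m) ℝ := 1 + lam • E with hA
  set B : Matrix (Fin m) (Fin m) ℝ := 1 + (lam + δ) • E with hB
  have hsmall' : |lam + δ| * N E < 1 := by
    rw [← hNhomog]; exact hsmall
  have hpos : 0 < 1 - |lam + δ| * N E := by linarith
  have hneg : ∀ w : Fin m → ℝ, nv (-w) = nv w := by
    intro w
    have := hvhomog (-1) w
    simpa using this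
  have hzero : ∀ v : Fin m → ℝ, nv v = 0 → v = 0 := by
    intro v hv
    funext j
    have h := hdual (Pi.single j 1) v
    have hd : (Pi.single j 1 : Fin m → ℝ) ⬝ᵥ v = v j := by
      simp [dotProduct, Pi.single_apply]
    rw [hd, hv, mul_zero] at h
    have h2 := abs_nonneg (v j)
    have : |v j| = 0 := le_antisymm h h2
    simpa using this
  -- key estimate: any v with B *ᵥ v = w satisfies the contraction bound
  have hcontract : ∀ v : Fin m → ℝ, nv v ≤ nv (B *ᵥ v) + |lam + δ| * N E * nv v := by
    intro v
    have hb : v = B *ᵥ v + -(((lam + δ) • E) *ᵥ v) := by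
      rw [hB, Matrix.add_mulVec, Matrix.one_mulVec]
      abel
    calc nv v = nv (B *ᵥ v + -(((lam + δ) • E) *ᵥ v)) := by rw [← hb]
      _ ≤ nv (B *ᵥ v) + nv (-(((lam + δ) • E) *ᵥ v)) := hvtri _ _
      _ = nv (B *ᵥ v) + nv (((lam + δ) • E) *ᵥ v) := by rw [hneg]
      _ ≤ nv (B *ᵥ v) + N ((lam + δ) • E) * nv v := by
          have := hcompat ((lam + δ) • E) v; linarith
      _ = nv (B *ᵥ v) + |lam + δ| * N E * nv v := by rw [hNhomog]
  -- B is invertible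
  have hBdet : IsUnit B.det := by
    rw [isUnit_iff_ne_zero]
    intro hdet
    obtain ⟨v, hv0, hBv⟩ := (Matrix.exists_mulVec_eq_zero_iff).2 hdet
    have h1 := hcontract v
    rw [hBv] at h1
    have h2 : nv (0 : Fin m → ℝ) = 0 := by
      have := hvhomog 0 0
      simpa using this
    rw [h2, zero_add] at h1
    have hnvv : nv v = 0 := by
      by_contra h
      have hv : 0 < nv v := lt_of_le_of_ne (hvnonneg v) (Ne.symm h)
      nlinarith
    exact hv0 (hzero v hnvv)
  -- the basic identities
  have hBx : B *ᵥ x (lam + δ) = x₀ := by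
    rw [hx, Matrix.mulVec_mulVec, Matrix.mul_nonsing_inv _ hBdet, Matrix.one_mulVec]
  have hAx : A *ᵥ x lam = x₀ := by
    rw [hx, Matrix.mulVec_mulVec, Matrix.mul_nonsing_inv _ hlam, Matrix.one_mulVec]
  set d : Fin m → ℝ := x (lam + δ) - x lam with hd
  have hBd : B *ᵥ d = -(δ • (E *ᵥ x lam)) := by
    have hBA : B = A + δ • E := by
      rw [hA, hB, add_smul]; abel
    rw [hd, Matrix.mulVec_sub, hBx, hBA, Matrix.add_mulVec, hAx,
      Matrix.smul_mulVec]
    abel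
  -- norm bound on d
  have hnd : nv d ≤ nv (B *ᵥ d) + |lam + δ| * N E * nv d := hcontract d
  have hnBd : nv (B *ᵥ d) = |δ| * nv (E *ᵥ x lam) := by
    rw [hBd, hneg, hvhomog]
  rw [hnBd] at hnd
  have hdbound : nv d ≤ |δ| * nv (E *ᵥ x lam) / (1 - |lam + δ| * N E) := by
    rw [le_div_iff₀ hpos]
    nlinarith
  -- coordinate bound
  have hdi : |d i| ≤ nv (Pi.single i 1) * nv d := by
    have h := hdual (Pi.single i 1) d
    have hdp : (Pi.single i 1 : Fin m → ℝ) ⬝ᵥ d = d i := by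
      simp [dotProduct, Pi.single_apply]
    rwa [hdp] at h
  have hsi : 0 ≤ nv (Pi.single i 1) := hvnonneg _
  calc |(x (lam + δ) - x lam) i| = |d i| := rfl
    _ ≤ nv (Pi.single i 1) * nv d := hdi
    _ ≤ nv (Pi.single i 1) * (|δ| * nv (E *ᵥ x lam) / (1 - |lam + δ| * N E)) :=
        mul_le_mul_of_nonneg_left hdbound hsi
    _ = |δ| * nv (Pi.single i 1) * nv (E *ᵥ x lam) / (1 - |lam + δ| * N E) := by ring
end

section
/- Feasibility preservation: with the setup above, suppose additionally x(λ) ≥ 0 componentwise and for each i, |δ| ‖e_i‖ ‖E x(λ)‖ / (1 − |λ+δ| ‖E‖) ≤ (x(λ))_i. Then x(λ+δ) ≥ 0 componentwise. -/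
open Matrix

theorem stmt14 {m : ℕ} (N : Matrix (Fin m) (Fin m) ℝ → ℝ)
    (nv : (Fin m → ℝ) → ℝ)
    (hNnonneg : ∀ A, 0 ≤ N A)
    (hNtri : ∀ A B, N (A + B) ≤ N A + N B)
    (hNhomog : ∀ (c : ℝ) A, N (c • A) = |c| * N A)
    (hNsub : ∀ A B, N (A * B) ≤ N A * N B)
    (hvnonneg : ∀ x, 0 ≤ nv x)
    (hvtri : ∀ x y, nv (x + y) ≤ nv x + nv y)
    (hvhomog : ∀ (c : ℝ) x, nv (c • x) = |c| * nv x)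
    (hcompat : ∀ (A : Matrix (Fin m) (Fin m) ℝ) (x : Fin m → ℝ), nv (A *ᵥ x) ≤ N A * nv x)
    (hdual : ∀ (c x : Fin m → ℝ), |c ⬝ᵥ x| ≤ nv c * nv x)
    (E : Matrix (Fin m) (Fin m) ℝ) (x₀ : Fin m → ℝ) (lam δ : ℝ)
    (hlam : IsUnit ((1 : Matrix (Fin m) (Fin m) ℝ) + lam • E).det)
    (hsmall : N ((lam + δ) • E) < 1)
    (x : ℝ → (Fin m → ℝ))
    (hx : ∀ μ : ℝ, x μ = ((1 : Matrix (Fin m) (Fin m) ℝ) + μ • E)⁻¹ *ᵥ x₀)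
    (hpos : ∀ i, 0 ≤ x lam i)
    (hbound : ∀ i : Fin m,
      |δ| * nv (Pi.single i 1) * nv (E *ᵥ x lam) / (1 - |lam + δ| * N E) ≤ x lam i) :
    ∀ i, 0 ≤ x (lam + δ) i := by
  intro i
  set B : Matrix (Fin m) (Fin m) ℝ := (lam + δ) • E with hB
  set A : Matrix (Fin m) (Fin m) ℝ := 1 + B with hA
  have hNB : N B < 1 := hsmall
  have hNB' : N B = |lam + δ| * N E := hNhomog _ _
  have hNBpos : 0 < 1 - N B := by linarith
  -- nv is positive on nonzero vectors
  have hnvpos : ∀ z : Fin m → ℝ, z ≠ 0 → 0 < nv z := by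
    intro z hz
    have h1 : z ⬝ᵥ z ≠ 0 := fun h => hz (dotProduct_self_eq_zero.mp h)
    have h2 : (0:ℝ) < |z ⬝ᵥ z| := abs_pos.mpr h1
    have h3 := hdual z z
    have h4 := hvnonneg z
    nlinarith
  -- A is invertible
  have hAunit : IsUnit A.det := by
    rcases eq_or_ne A.det 0 with hdet | hdet
    · exfalso
      obtain ⟨v, hv0, hv⟩ := (Matrix.exists_mulVec_eq_zero_iff).mpr hdet
      have hv' : v + B *ᵥ v = 0 := by
        rw [hA, Matrix.add_mulVec, Matrix.one_mulVec] at hv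
        exact hv
      have hveq : v = (-1 : ℝ) • (B *ᵥ v) := by
        have := hv'
        funext j
        have := congrFun hv' j
        simp only [Pi.add_apply, Pi.zero_apply] at this
        simp [neg_one_smul]
        linarith
      have h1 : nv v = nv (B *ᵥ v) := by
        conv_lhs => rw [hveq]
        rw [hvhomog]; simp
      have h2 := hcompat B v
      have h3 := hnvpos v hv0
      nlinarith
    · exact isUnit_iff_ne_zero.mpr hdet
  set y : Fin m → ℝ := E *ᵥ x lam with hy
  set w : Fin m → ℝ := A⁻¹ *ᵥ y with hw
  have hAw : A *ᵥ w = y := by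
    rw [hw, Matrix.mulVec_mulVec, Matrix.mul_nonsing_inv A hAunit, Matrix.one_mulVec]
  -- bound on nv w
  have hwy : w + B *ᵥ w = y := by
    rw [← hAw, hA, Matrix.add_mulVec, Matrix.one_mulVec]
  have hnvw : nv w ≤ nv y / (1 - N B) := by
    have h1 : nv w ≤ nv y + nv ((-1 : ℝ) • (B *ᵥ w)) := by
      have : w = y + (-1 : ℝ) • (B *ᵥ w) := by
        funext j
        have := congrFun hwy j
        simp only [Pi.add_apply] at this ⊢
        simp only [Pi.smul_apply, smul_eq_mul]
        linarith
      calc nv w = nv (y + (-1 : ℝ) • (B *ᵥ w)) := by rw [← this]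
        _ ≤ nv y + nv ((-1 : ℝ) • (B *ᵥ w)) := hvtri _ _
    rw [hvhomog] at h1
    simp only [abs_neg, abs_one, one_mul] at h1
    have h2 := hcompat B w
    rw [le_div_iff₀ hNBpos]
    nlinarith
  -- key identity
  have hx0 : x₀ = ((1 : Matrix (Fin m) (Fin m) ℝ) + lam • E) *ᵥ x lam := by
    rw [hx lam, Matrix.mulVec_mulVec,
      Matrix.mul_nonsing_inv _ hlam, Matrix.one_mulVec]
  have hkey : x (lam + δ) = x lam - δ • w := by
    have hAid : A *ᵥ (x lam - δ • w) = x₀ := by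
      rw [Matrix.mulVec_sub, Matrix.mulVec_smul, hAw, hA, Matrix.add_mulVec,
        Matrix.one_mulVec, hB, Matrix.smul_mulVec, hx0, Matrix.add_mulVec,
        Matrix.one_mulVec, Matrix.smul_mulVec, ← hy]
      module
    have : x (lam + δ) = A⁻¹ *ᵥ x₀ := by rw [hx (lam + δ), hA, hB]
    rw [this, ← hAid, Matrix.mulVec_mulVec, Matrix.nonsing_inv_mul A hAunit,
      Matrix.one_mulVec]
  -- conclude componentwise
  have hwi : |w i| ≤ nv (Pi.single i 1) * nv w := by
    have := hdual (Pi.single i 1) w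
    rwa [single_dotProduct, one_mul] at this
  have hch : |δ| * |w i| ≤ |δ| * nv (Pi.single i 1) * nv (E *ᵥ x lam) / (1 - |lam + δ| * N E) := by
    rw [← hNB', ← hy]
    have h1 : |δ| * |w i| ≤ |δ| * (nv (Pi.single i 1) * nv w) :=
      mul_le_mul_of_nonneg_left hwi (abs_nonneg δ)
    have h2 : nv (Pi.single i 1) * nv w ≤ nv (Pi.single i 1) * (nv y / (1 - N B)) :=
      mul_le_mul_of_nonneg_left hnvw (hvnonneg _)
    calc |δ| * |w i| ≤ |δ| * (nv (Pi.single i 1) * nv w) := h1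
      _ ≤ |δ| * (nv (Pi.single i 1) * (nv y / (1 - N B))) :=
          mul_le_mul_of_nonneg_left h2 (abs_nonneg δ)
      _ = |δ| * nv (Pi.single i 1) * nv y / (1 - N B) := by ring
  have hfin := (hbound i)
  have hxi : x (lam + δ) i = x lam i - δ * w i := by
    rw [hkey]; simp
  rw [hxi]
  have habs : |δ * w i| = |δ| * |w i| := abs_mul _ _
  have : δ * w i ≤ |δ * w i| := le_abs_self _
  nlinarith [abs_nonneg (δ * w i)]
end

section
/- Tweaked eigendecomposition formula: let E ∈ ℝ^{m×m}, α, β as above, F = [[E, α],[β, 0]] diagonalizable as F = QΣQ^{-1} with Σ diagonal, and u, v such that u vᵀ = Q^{-1} blockDiag(αβ,0) Q. Set R(λ) = I_{m+1} + λΣ. If R(λ) is invertible, 1 + λ² vᵀ R(λ)^{-1} u ≠ 0, and I_m + λE is invertible, then for any b ∈ ℝ^m: (I_m + λE)^{-1} b = [I_m 0] · Q (R(λ)^{-1} − λ² R(λ)^{-1} u vᵀ R(λ)^{-1} / (1 + λ² vᵀ R(λ)^{-1} u)) Q^{-1} · [I_m; 0] b. -/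
open Matrix

theorem stmt18 {m : ℕ} (E : Matrix (Fin m) (Fin m) ℂ)
    (α : Matrix (Fin m) (Fin 1) ℂ) (β : Matrix (Fin 1) (Fin m) ℂ)
    (Q S : Matrix (Fin m ⊕ Fin 1) (Fin m ⊕ Fin 1) ℂ)
    (hQ : IsUnit Q.det) (hS : S.IsDiag)
    (hF : Matrix.fromBlocks E α β 0 = Q * S * Q⁻¹)
    (u v : (Fin m ⊕ Fin 1) → ℂ)
    (huv : Matrix.vecMulVec u v = Q⁻¹ * Matrix.fromBlocks (α * β) 0 0 0 * Q)
    (lam : ℂ)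
    (hR : IsUnit ((1 : Matrix (Fin m ⊕ Fin 1) (Fin m ⊕ Fin 1) ℂ) + lam • S).det)
    (hden : 1 + lam ^ 2 * (v ⬝ᵥ (((1 : Matrix (Fin m ⊕ Fin 1) (Fin m ⊕ Fin 1) ℂ) + lam • S)⁻¹ *ᵥ u)) ≠ 0)
    (hE : IsUnit ((1 : Matrix (Fin m) (Fin m) ℂ) + lam • E).det)
    (b : Fin m → ℂ) :
    ((1 : Matrix (Fin m) (Fin m) ℂ) + lam • E)⁻¹ *ᵥ b = fun i =>
      ((Q * (((1 : Matrix (Fin m ⊕ Fin 1) (Fin m ⊕ Fin 1) ℂ) + lam • S)⁻¹ -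
          (1 + lam ^ 2 * (v ⬝ᵥ (((1 : Matrix (Fin m ⊕ Fin 1) (Fin m ⊕ Fin 1) ℂ) + lam • S)⁻¹ *ᵥ u)))⁻¹ •
            ((lam ^ 2) • (((1 : Matrix (Fin m ⊕ Fin 1) (Fin m ⊕ Fin 1) ℂ) + lam • S)⁻¹ *
              Matrix.vecMulVec u v *
              ((1 : Matrix (Fin m ⊕ Fin 1) (Fin m ⊕ Fin 1) ℂ) + lam • S)⁻¹))) * Q⁻¹) *ᵥ
        Sum.elim b (fun _ => 0)) (Sum.inl i) := by
  have hQl : Q⁻¹ * Q = 1 := nonsing_inv_mul Q hQ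
  have hQr : Q * Q⁻¹ = 1 := mul_nonsing_inv Q hQ
  set R : Matrix (Fin m ⊕ Fin 1) (Fin m ⊕ Fin 1) ℂ := 1 + lam • S with hRdef
  have hRl : R⁻¹ * R = 1 := nonsing_inv_mul R hR
  set d : ℂ := v ⬝ᵥ (R⁻¹ *ᵥ u) with hd
  set c : ℂ := 1 + lam ^ 2 * d with hc
  set W : Matrix (Fin m ⊕ Fin 1) (Fin m ⊕ Fin 1) ℂ := vecMulVec u v with hW
  set M : Matrix (Fin m ⊕ Fin 1) (Fin m ⊕ Fin 1) ℂ :=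
    Q * (R⁻¹ - c⁻¹ • (lam ^ 2 • (R⁻¹ * W * R⁻¹))) * Q⁻¹ with hM
  set G : Matrix (Fin m ⊕ Fin 1) (Fin m ⊕ Fin 1) ℂ :=
    fromBlocks (1 + lam • E + lam ^ 2 • (α * β)) (lam • α) (lam • β) 1 with hG
  -- G as a sum
  have hGdecomp : G = 1 + lam • fromBlocks E α β 0 + lam ^ 2 • fromBlocks (α * β) 0 0 0 := by
    rw [hG, ← fromBlocks_one, fromBlocks_smul, fromBlocks_smul, fromBlocks_add, fromBlocks_add]
    congr 1 <;> simp
  -- conjugation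
  have hconj : Q⁻¹ * (G * Q) = (R + lam ^ 2 • W) := by
    rw [hGdecomp, hF, huv]
    simp only [add_mul, mul_add, Matrix.mul_smul, Matrix.smul_mul, one_mul, mul_one]
    rw [hRdef]
    simp only [mul_assoc]
    rw [hQl]
    simp only [mul_one]
    rw [← mul_assoc Q⁻¹ Q S, hQl, one_mul]
  -- W * R⁻¹ * W = d • W
  have hWRW : W * (R⁻¹ * W) = d • W := by
    ext i j
    simp only [hW, mul_apply, vecMulVec_apply, Matrix.smul_apply, smul_eq_mul, hd, dotProduct,
      Matrix.mulVec, Finset.mul_sum, Finset.sum_mul]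
    refine Finset.sum_congr rfl fun k _ => Finset.sum_congr rfl fun l _ => ?_
    ring
  -- Sherman-Morrison core
  have hXG : (R⁻¹ - c⁻¹ • (lam ^ 2 • (R⁻¹ * W * R⁻¹))) * (R + lam ^ 2 • W) = 1 := by
    have h1 : R⁻¹ * W * R⁻¹ * (R + lam ^ 2 • W) = R⁻¹ * W + (lam ^ 2 * d) • (R⁻¹ * W) := by
      rw [mul_add, mul_assoc (R⁻¹ * W) R⁻¹ R, hRl, mul_one, Matrix.mul_smul,
        mul_assoc (R⁻¹ * W) R⁻¹ W, mul_assoc R⁻¹ W (R⁻¹ * W), hWRW, Matrix.mul_smul,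
        smul_smul]
    rw [sub_mul, Matrix.smul_mul, Matrix.smul_mul, h1, mul_add, hRl, Matrix.mul_smul]
    have key : c⁻¹ • lam ^ 2 • (R⁻¹ * W + (lam ^ 2 * d) • (R⁻¹ * W)) = lam ^ 2 • (R⁻¹ * W) := by
      rw [smul_smul, smul_add, smul_smul, ← add_smul]
      congr 1
      field_simp [hc]
      ring
    rw [key, add_sub_cancel_right]
  have hGQ : G = Q * (R + lam ^ 2 • W) * Q⁻¹ := by
    rw [← hconj, ← mul_assoc Q Q⁻¹ (G * Q), hQr, one_mul, mul_assoc G Q Q⁻¹, hQr, mul_one]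
  have assoc : ∀ A B : Matrix (Fin m ⊕ Fin 1) (Fin m ⊕ Fin 1) ℂ,
      (Q * A * Q⁻¹) * (Q * B * Q⁻¹) = Q * (A * B) * Q⁻¹ := by
    intro A B
    rw [mul_assoc (Q * A) Q⁻¹ (Q * B * Q⁻¹), ← mul_assoc Q⁻¹ (Q * B) Q⁻¹,
      ← mul_assoc Q⁻¹ Q B, hQl, one_mul, ← mul_assoc (Q * A) B Q⁻¹, mul_assoc Q A B]
  have hMG : M * G = 1 := by
    rw [hM, hGQ, assoc, hXG, mul_one, hQr]
  -- the solution vector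
  set x : Fin m → ℂ := (1 + lam • E)⁻¹ *ᵥ b with hx
  have hEx : (1 + lam • E) *ᵥ x = b := by
    rw [hx, mulVec_mulVec, mul_nonsing_inv _ hE, one_mulVec]
  set w : (Fin m ⊕ Fin 1) → ℂ := Sum.elim x (fun _ => -(lam * (β *ᵥ x) 0)) with hw
  have hGw : G *ᵥ w = Sum.elim b (fun _ => 0) := by
    rw [hG, fromBlocks_mulVec]
    have hcl : w ∘ Sum.inl = x := rfl
    have hcr : w ∘ Sum.inr = fun _ => -(lam * (β *ᵥ x) 0) := rfl
    rw [hcl, hcr]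
    funext s
    cases s with
    | inl i =>
      simp only [Sum.elim_inl]
      have hExi := congrFun hEx i
      simp only [add_mulVec, smul_mulVec, one_mulVec, Pi.add_apply, Pi.smul_apply,
        smul_eq_mul] at hExi ⊢
      rw [← mulVec_mulVec]
      have hα : ∀ y : Fin 1 → ℂ, (α *ᵥ y) i = α i 0 * y 0 := fun y => by
        simp [Matrix.mulVec, dotProduct]
      rw [hα, hα]
      rw [← hExi]
      ring
    | inr j =>
      simp only [Sum.elim_inr]
      have : j = 0 := Subsingleton.elim _ _
      subst this
      simp only [smul_mulVec, one_mulVec, Pi.add_apply, Pi.smul_apply, smul_eq_mul]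
      ring
  -- conclude
  have hfin : M *ᵥ Sum.elim b (fun _ => 0) = w := by
    rw [← hGw, mulVec_mulVec, hMG, one_mulVec]
  funext i
  exact (congrFun hfin (Sum.inl i)).symm
end
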